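/- In a finite product X = ∏_{i<n} X(F_i), if U ⊆ X is a clopen set whose trace on ℕⁿ contains the 'cofinite box' 𝕋ᴺ = (ℕ \ {0,…,N−1})ⁿ, then U contains Tᴺ = ∏_{i<n}(X(F_i) \ {0,…,N−1}). -/

import Mathlib

/-- ℕ* : the nonprincipal ultrafilters on ℕ, with the topology inherited from βℕ. -/
def NStar : Type := {U : Ultrafilter ℕ // (U : Filter ℕ) ≤ Filter.cofinite}

instance : TopologicalSpace NStar := instTopologicalSpaceSubtype

/-- A* : the set of nonprincipal ultrafilters containing A. -/
def AStar (A : Set ℕ) : Set NStar := {U | A ∈ U.1}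

/-- The space X(F): underlying set ℕ ⊔ F. -/
def XF (F : Set (Set NStar)) : Type := ℕ ⊕ F

/-- The coarsest topology making each {n} (n ∈ ℕ) open, and each {K} ∪ A open
whenever K ∈ F, A ⊆ ℕ and K ⊆ A*. -/
instance (F : Set (Set NStar)) : TopologicalSpace (XF F) :=
  TopologicalSpace.generateFrom
    ({S | ∃ n : ℕ, S = {Sum.inl n}} ∪
     {S | ∃ (K : F) (A : Set ℕ), (K : Set NStar) ⊆ AStar A ∧
        S = insert (Sum.inr K) (Sum.inl '' A)})

lemma key_open {F : Set (Set NStar)} {K : F} {U : NStar} (hUK : U ∈ (K : Set NStar))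
    {V : Set (XF F)} (hV : IsOpen V) (hK : Sum.inr K ∈ V) :
    {a : ℕ | (Sum.inl a : XF F) ∈ V} ∈ U.1 := by
  have hV' : TopologicalSpace.GenerateOpen
      ({S | ∃ n : ℕ, S = {Sum.inl n}} ∪
       {S | ∃ (K : F) (A : Set ℕ), (K : Set NStar) ⊆ AStar A ∧
          S = insert (Sum.inr K) (Sum.inl '' A)}) V := hV
  clear hV
  induction hV' with
  | basic s hs =>
    rcases hs with ⟨m, rfl⟩ | ⟨K', A, hKA, rfl⟩
    · exact absurd (Set.mem_singleton_iff.mp hK) Sum.inr_ne_inl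
    · have hKK : K = K' := by
        rcases hK with h | ⟨a, _, h⟩
        · exact Sum.inr.inj h
        · exact absurd h (by simp)
      subst hKK
      have hA : A ∈ U.1 := hKA hUK
      exact Filter.mem_of_superset hA (fun a ha => Or.inr ⟨a, ha, rfl⟩)
  | univ => exact Filter.univ_mem' (fun a => Set.mem_univ _)
  | inter s t _ _ ihs iht => exact Filter.inter_mem (ihs hK.1) (iht hK.2)
  | sUnion S _ ih =>
    rcases hK with ⟨s, hsS, hKs⟩
    exact Filter.mem_of_superset (ih s hsS hKs) (fun a ha => ⟨s, hsS, ha⟩)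

lemma mem_closure_inr {F : Set (Set NStar)} (K : F) (hK : Set.Nonempty (K : Set NStar))
    (N : ℕ) : (Sum.inr K : XF F) ∈ @closure (XF F) (instTopologicalSpaceXF F) (Sum.inl '' {m : ℕ | N ≤ m}) := by
  obtain ⟨U, hU⟩ := hK
  refine (mem_closure_iff (X := XF F) (s := (Sum.inl '' {m : ℕ | N ≤ m} : Set (XF F))) (x := (Sum.inr K : XF F))).mpr ?_
  intro V hV hKV
  have h1 := key_open hU hV hKV
  have h2 : {m : ℕ | N ≤ m} ∈ U.1 := by
    apply U.2
    rw [Filter.mem_cofinite]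
    apply (Set.finite_lt_nat N).subset
    intro x hx
    simpa [not_le] using hx
  obtain ⟨a, ha1, ha2⟩ := Filter.nonempty_of_mem (Filter.inter_mem h1 h2)
  exact ⟨Sum.inl a, ha1, ⟨a, ha2, rfl⟩⟩

/-- In X = ∏_{i<n} X(F_i), if a clopen U contains the cofinite box
𝕋ᴺ = (ℕ∖N)ⁿ ⊆ ℕⁿ, then U contains Tᴺ = ∏_{i<n}(X(F_i) ∖ N). -/
theorem clopen_contains_cofinite_box (n N : ℕ) (F : Fin n → Set (Set NStar))
    (hne : ∀ i, ∀ K ∈ F i, Set.Nonempty K) (hcl : ∀ i, ∀ K ∈ F i, IsClosed K)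
    (hdisj : ∀ i, ∀ K ∈ F i, ∀ L ∈ F i, K ≠ L → Disjoint K L)
    (U : Set (∀ i, XF (F i))) (hU : IsClopen U)
    (htrace : ∀ x : Fin n → ℕ, (∀ i, N ≤ x i) →
      (fun i => (Sum.inl (x i) : XF (F i))) ∈ U) :
    ∀ y : ∀ i, XF (F i), (∀ i, ∀ m : ℕ, y i = Sum.inl m → N ≤ m) → y ∈ U := by
  classical
  have main : ∀ s : Finset (Fin n), ∀ y : ∀ i, XF (F i),
      (∀ i, ∀ m : ℕ, y i = Sum.inl m → N ≤ m) →
      (∀ i ∉ s, ∃ m : ℕ, y i = Sum.inl m) → y ∈ U := by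
    intro s
    induction s using Finset.induction_on with
    | empty =>
      intro y hy1 hy2
      choose x hx using fun i => hy2 i (Finset.notMem_empty i)
      have hyx : y = fun i => Sum.inl (x i) := funext hx
      rw [hyx]
      exact htrace x (fun i => hy1 i (x i) (hx i))
    | @insert a s ha ih =>
      intro y hy1 hy2
      cases hya : y a with
      | inl m =>
        apply ih y hy1
        intro i hi
        by_cases h : i = a
        · subst h; exact ⟨m, hya⟩
        · exact hy2 i (by simp [Finset.mem_insert, h, hi])
      | inr K =>
        have hcont : Continuous (fun z : XF (F a) => Function.update y a z) :=
          continuous_const.update a continuous_id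
        have hclosed : IsClosed ((fun z : XF (F a) => Function.update y a z) ⁻¹' U) :=
          hU.1.preimage hcont
        have hsub : Sum.inl '' {m : ℕ | N ≤ m} ⊆
            (fun z : XF (F a) => Function.update y a z) ⁻¹' U := by
          rintro _ ⟨m, hm, rfl⟩
          apply ih
          · intro i m' h
            by_cases hia : i = a
            · subst hia
              have h := (Function.update_self i (Sum.inl m : XF (F i)) y).symm.trans h
              obtain rfl : m = m' := Sum.inl.inj h
              exact hm
            · have h := (Function.update_of_ne hia (Sum.inl m : XF (F a)) y).symm.trans h
              exact hy1 i m' h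
          · intro i hi
            by_cases hia : i = a
            · subst hia
              exact ⟨m, Function.update_self _ _ _⟩
            · obtain ⟨m'', hm''⟩ := hy2 i (by simp [Finset.mem_insert, hia, hi])
              exact ⟨m'', (Function.update_of_ne hia (Sum.inl m : XF (F a)) y).trans hm''⟩
        have hmem : Sum.inr K ∈ (fun z : XF (F a) => Function.update y a z) ⁻¹' U :=
          (hclosed.closure_subset)
            ((closure_mono (X := XF (F a)) hsub)
              (mem_closure_inr K (hne a K K.2) N))
        have : Function.update y a (Sum.inr K) ∈ U := hmem
        rwa [← hya, Function.update_eq_self] at this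
  exact fun y hy => main Finset.univ y hy (fun i hi => absurd (Finset.mem_univ i) hi)
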